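/- Let (x(A))_{A} and (z_{A₀}(A₁))_{A₀,A₁} be nonnegative weights on finite subsets of {1,…,n} satisfying: (a) z_{A₀}(A₁) = 0 unless dist(A₀, A₁) ≤ 1; (b) Σ_{A₁} ⟨|min A₀ − min A₁|₊⟩^{1+α} z_{A₀}(A₁) ≤ C uniformly in A₀; (c) Σ_{τ>0} ⟨τ⟩^{1+α} sup_{τ₀−τ₁=τ} sup_{A₀: min A₀ = τ₀} Σ_{A₁: min A₁ = τ₁} z_{A₀}(A₁) ≤ C; and (d) Σ_{A₀: min A₀ ≤ ñ} ⟨ñ − min A₀⟩^{α} x(A₀) ≤ C and Σ_{A₀: min A₀ = τ₀} x(A₀) ≤ C uniformly in τ₀. Then Σ_{A₀, A₁: min(A₀∪A₁) ≤ ñ} ⟨ñ − min(A₀∪A₁)⟩^{α} x(A₀) z_{A₀}(A₁) ≤ C', for a constant C' depending only on C and α > 0. -/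

import Mathlib

open Finset

/-- Japanese bracket. -/
noncomputable def jbracket (x : ℝ) : ℝ := Real.sqrt (x ^ 2 + 1)

/-- minimum of a finite set of naturals (`0` for the empty set). -/
def minOf (A : Finset ℕ) : ℕ := WithTop.untopD 0 A.min

/-- Two finite subsets of `ℕ` are within distance `1` of each other. -/
def Close (A B : Finset ℕ) : Prop := ∃ a ∈ A, ∃ b ∈ B, ((a : ℤ) - b).natAbs ≤ 1


lemma jb_pos (x : ℝ) : 0 < jbracket x := Real.sqrt_pos.2 (by positivity)
lemma jb_nonneg (x : ℝ) : 0 ≤ jbracket x := (jb_pos x).le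
lemma jb_one_le (x : ℝ) : 1 ≤ jbracket x := by
  rw [jbracket]
  nlinarith [Real.sq_sqrt (by positivity : (0:ℝ) ≤ x^2+1), Real.sqrt_nonneg (x^2+1), sq_nonneg x, sq_nonneg (Real.sqrt (x^2+1) - 1)]
lemma jb_mono {a b : ℝ} (ha : 0 ≤ a) (hab : a ≤ b) : jbracket a ≤ jbracket b :=
  Real.sqrt_le_sqrt (by nlinarith)
lemma le_jb {x : ℝ} (hx : 0 ≤ x) : x ≤ jbracket x := by
  rw [jbracket, show x = Real.sqrt (x^2) by rw [Real.sqrt_sq hx]]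
  exact Real.sqrt_le_sqrt (by nlinarith [Real.sq_sqrt (by positivity : (0:ℝ) ≤ x^2)])
lemma jb_submul {a b : ℝ} (_ha : 0 ≤ a) (_hb : 0 ≤ b) :
    jbracket (a + b) ≤ Real.sqrt 2 * jbracket a * jbracket b := by
  rw [jbracket, jbracket, jbracket, ← Real.sqrt_mul (by norm_num), ← Real.sqrt_mul (by positivity)]
  exact Real.sqrt_le_sqrt (by nlinarith [sq_nonneg (a - b), sq_nonneg (a*b)])

lemma minOf_eq_min' {A : Finset ℕ} (h : A.Nonempty) : minOf A = A.min' h := by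
  rw [minOf, ← Finset.coe_min' h]; rfl
lemma minOf_mem {A : Finset ℕ} (h : A.Nonempty) : minOf A ∈ A := by
  rw [minOf_eq_min' h]; exact A.min'_mem h
lemma minOf_le {A : Finset ℕ} (h : A.Nonempty) {a : ℕ} (ha : a ∈ A) : minOf A ≤ a := by
  rw [minOf_eq_min' h]; exact A.min'_le a ha
lemma minOf_union {A B : Finset ℕ} (hA : A.Nonempty) (hB : B.Nonempty) :
    minOf (A ∪ B) = min (minOf A) (minOf B) := by
  have hAB : (A ∪ B).Nonempty := hA.mono subset_union_left
  apply le_antisymm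
  · rcases le_total (minOf A) (minOf B) with h | h
    · rw [min_eq_left h]; exact minOf_le hAB (mem_union_left _ (minOf_mem hA))
    · rw [min_eq_right h]; exact minOf_le hAB (mem_union_right _ (minOf_mem hB))
  · rcases mem_union.1 (minOf_mem hAB) with h | h
    · exact le_trans (min_le_left _ _) (minOf_le hA h)
    · exact le_trans (min_le_right _ _) (minOf_le hB h)


/-- Abstract two-scale summation lemma (proof of item 5): given nonnegative weights
`x(A₀)` and `z_{A₀}(A₁)` on nonempty subsets of `{1,…,n}` satisfying the locality,
decay and translation-uniform bounds (a)–(d), the weighted double sum over pairs with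
`min(A₀ ∪ A₁) ≤ ntil` is bounded by a constant depending only on `C` and `α`. -/
theorem two_scale_summation (α C : ℝ) (hα : 0 < α) (hC : 0 < C) :
    ∃ C' > 0, ∀ (n ntil : ℕ), ntil ≤ n →
      ∀ (x : Finset ℕ → ℝ) (z : Finset ℕ → Finset ℕ → ℝ) (s : ℕ → ℝ),
      (∀ A₀, 0 ≤ x A₀) → (∀ A₀ A₁, 0 ≤ z A₀ A₁) → (∀ τ, 0 ≤ s τ) →
      -- (a) locality
      (∀ A₀ A₁, ¬ Close A₀ A₁ → z A₀ A₁ = 0) →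
      -- (b) decay in |min A₀ − min A₁|₊
      (∀ A₀ ∈ (Finset.Icc 1 n).powerset.filter (fun A => A.Nonempty),
        (∑ A₁ ∈ (Finset.Icc 1 n).powerset.filter (fun A => A.Nonempty),
          (jbracket (max ((minOf A₀ : ℝ) - (minOf A₁ : ℝ)) 0)) ^ (1 + α) * z A₀ A₁) ≤ C) →
      -- (c) translation-uniform decay, encoded by a majorant `s`
      (∀ (τ τ₀ τ₁ : ℕ) (A₀ : Finset ℕ), τ₀ - τ₁ = τ → minOf A₀ = τ₀ →
        (∑ A₁ ∈ ((Finset.Icc 1 n).powerset.filter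
            (fun A => A.Nonempty ∧ minOf A = τ₁)), z A₀ A₁) ≤ s τ) →
      ((∑ τ ∈ Finset.Icc 1 n, (jbracket τ) ^ (1 + α) * s τ) ≤ C) →
      -- (d) bounds on the boundary weights x
      ((∑ A₀ ∈ ((Finset.Icc 1 n).powerset.filter
          (fun A => A.Nonempty ∧ minOf A ≤ ntil)),
        (jbracket ((ntil : ℝ) - (minOf A₀ : ℝ))) ^ α * x A₀) ≤ C) →
      (∀ τ₀ : ℕ, (∑ A₀ ∈ ((Finset.Icc 1 n).powerset.filter
          (fun A => A.Nonempty ∧ minOf A = τ₀)), x A₀) ≤ C) →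
      -- conclusion
      (∑ A₀ ∈ (Finset.Icc 1 n).powerset.filter (fun A => A.Nonempty),
        ∑ A₁ ∈ (Finset.Icc 1 n).powerset.filter (fun A => A.Nonempty),
          (if minOf (A₀ ∪ A₁) ≤ ntil then
            (jbracket ((ntil : ℝ) - (minOf (A₀ ∪ A₁) : ℝ))) ^ α * x A₀ * z A₀ A₁
           else 0)) ≤ C' := by
  classical
  have hK : (0:ℝ) < Real.sqrt 2 ^ α := Real.rpow_pos_of_pos (by positivity) α
  refine ⟨Real.sqrt 2 ^ α * C ^ 2 + C ^ 2, by positivity, ?_⟩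
  intro n ntil hnt x z s hx hz hs _ha hb hc hsC hd1 hd2
  set S : Finset (Finset ℕ) := (Finset.Icc 1 n).powerset.filter (fun A => A.Nonempty) with hS
  -- basic facts about members of S
  have hSmem : ∀ A ∈ S, A.Nonempty ∧ 1 ≤ minOf A ∧ minOf A ≤ n := by
    intro A hA
    rw [hS, mem_filter, mem_powerset] at hA
    obtain ⟨hsub, hne⟩ := hA
    have := hsub (minOf_mem hne)
    rw [Finset.mem_Icc] at this
    exact ⟨hne, this.1, this.2⟩
  set T1 : Finset ℕ → Finset ℕ → ℝ := fun A₀ A₁ =>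
    (if minOf A₀ ≤ ntil then Real.sqrt 2 ^ α * jbracket ((ntil : ℝ) - (minOf A₀ : ℝ)) ^ α * x A₀ else 0) *
      ((jbracket (max ((minOf A₀ : ℝ) - (minOf A₁ : ℝ)) 0)) ^ (1 + α) * z A₀ A₁) with hT1def
  set T2 : Finset ℕ → Finset ℕ → ℝ := fun A₀ A₁ =>
    (if ntil < minOf A₀ ∧ minOf A₁ ≤ ntil then
      jbracket ((ntil : ℝ) - (minOf A₁ : ℝ)) ^ α * (x A₀ * z A₀ A₁) else 0) with hT2def
  have hT1nn : ∀ A₀ A₁, 0 ≤ T1 A₀ A₁ := by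
    intro A₀ A₁; rw [hT1def]; dsimp only
    apply mul_nonneg
    · split_ifs
      · exact mul_nonneg (mul_nonneg hK.le (Real.rpow_nonneg (jb_nonneg _) _)) (hx _)
      · exact le_refl 0
    · exact mul_nonneg (Real.rpow_nonneg (jb_nonneg _) _) (hz _ _)
  have hT2nn : ∀ A₀ A₁, 0 ≤ T2 A₀ A₁ := by
    intro A₀ A₁; rw [hT2def]; dsimp only
    split_ifs
    · exact mul_nonneg (Real.rpow_nonneg (jb_nonneg _) _) (mul_nonneg (hx _) (hz _ _))
    · exact le_refl 0
  -- termwise bound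
  have key : ∀ A₀ ∈ S, ∀ A₁ ∈ S,
      (if minOf (A₀ ∪ A₁) ≤ ntil then
        (jbracket ((ntil : ℝ) - (minOf (A₀ ∪ A₁) : ℝ))) ^ α * x A₀ * z A₀ A₁ else 0)
      ≤ T1 A₀ A₁ + T2 A₀ A₁ := by
    intro A₀ hA₀ A₁ hA₁
    obtain ⟨hne₀, -, -⟩ := hSmem A₀ hA₀
    obtain ⟨hne₁, -, -⟩ := hSmem A₁ hA₁
    have hun : minOf (A₀ ∪ A₁) = min (minOf A₀) (minOf A₁) := minOf_union hne₀ hne₁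
    by_cases hm : minOf (A₀ ∪ A₁) ≤ ntil
    · rw [if_pos hm]
      by_cases h0 : minOf A₀ ≤ ntil
      · -- case 1 : bound by T1
        have h2 : T2 A₀ A₁ = 0 := by
          rw [hT2def]; dsimp only; rw [if_neg]; push_neg; intro h; omega
        rw [h2, add_zero, hT1def]; dsimp only; rw [if_pos h0]
        set a : ℝ := (ntil : ℝ) - (minOf A₀ : ℝ) with hadef
        set b : ℝ := max ((minOf A₀ : ℝ) - (minOf A₁ : ℝ)) 0 with hbdef
        have hb0 : 0 ≤ b := le_max_right _ _
        have ha0 : 0 ≤ a := by rw [hadef]; have := h0; push_cast; simp only [sub_nonneg]; exact_mod_cast h0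
        have hab : (ntil : ℝ) - (minOf (A₀ ∪ A₁) : ℝ) = a + b := by
          rw [hun, hadef, hbdef]
          rcases le_total (minOf A₀) (minOf A₁) with h | h
          · rw [min_eq_left h, max_eq_right (by simp; exact_mod_cast h)]; ring
          · rw [min_eq_right h, max_eq_left (by simp; exact_mod_cast h)]
            push_cast; ring
        have hchain : jbracket ((ntil : ℝ) - (minOf (A₀ ∪ A₁) : ℝ)) ^ α
            ≤ Real.sqrt 2 ^ α * jbracket a ^ α * jbracket b ^ (1 + α) := by
          rw [hab]
          calc jbracket (a + b) ^ α
              ≤ (Real.sqrt 2 * jbracket a * jbracket b) ^ α :=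
                Real.rpow_le_rpow (jb_nonneg _) (jb_submul ha0 hb0) hα.le
            _ = Real.sqrt 2 ^ α * jbracket a ^ α * jbracket b ^ α := by
                rw [Real.mul_rpow (mul_nonneg (Real.sqrt_nonneg 2) (jb_nonneg _)) (jb_nonneg _),
                  Real.mul_rpow (Real.sqrt_nonneg 2) (jb_nonneg _)]
            _ ≤ Real.sqrt 2 ^ α * jbracket a ^ α * jbracket b ^ (1 + α) := by
                apply mul_le_mul_of_nonneg_left _
                  (mul_nonneg hK.le (Real.rpow_nonneg (jb_nonneg _) _))
                exact Real.rpow_le_rpow_of_exponent_le (jb_one_le _) (by linarith)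
        calc jbracket ((ntil : ℝ) - (minOf (A₀ ∪ A₁) : ℝ)) ^ α * x A₀ * z A₀ A₁
            ≤ (Real.sqrt 2 ^ α * jbracket a ^ α * jbracket b ^ (1 + α)) * x A₀ * z A₀ A₁ := by
              apply mul_le_mul_of_nonneg_right _ (hz _ _)
              exact mul_le_mul_of_nonneg_right hchain (hx _)
          _ = Real.sqrt 2 ^ α * jbracket a ^ α * x A₀ * (jbracket b ^ (1 + α) * z A₀ A₁) := by ring
      · -- case 2 : bound by T2
        have hmin : min (minOf A₀) (minOf A₁) = minOf A₁ := by omega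
        have h1 : T1 A₀ A₁ = 0 := by rw [hT1def]; dsimp only; rw [if_neg h0, zero_mul]
        have hcond : ntil < minOf A₀ ∧ minOf A₁ ≤ ntil := by omega
        rw [h1, zero_add, hT2def]; dsimp only; rw [if_pos hcond, hun, hmin]; ring_nf
        exact le_refl _
    · rw [if_neg hm]
      exact add_nonneg (hT1nn _ _) (hT2nn _ _)
  have split : (∑ A₀ ∈ S, ∑ A₁ ∈ S,
      (if minOf (A₀ ∪ A₁) ≤ ntil then
        (jbracket ((ntil : ℝ) - (minOf (A₀ ∪ A₁) : ℝ))) ^ α * x A₀ * z A₀ A₁ else 0))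
      ≤ (∑ A₀ ∈ S, ∑ A₁ ∈ S, T1 A₀ A₁) + (∑ A₀ ∈ S, ∑ A₁ ∈ S, T2 A₀ A₁) := by
    rw [← Finset.sum_add_distrib]
    apply Finset.sum_le_sum
    intro A₀ hA₀
    rw [← Finset.sum_add_distrib]
    exact Finset.sum_le_sum (fun A₁ hA₁ => key A₀ hA₀ A₁ hA₁)
  -- Bound on T1 double sum
  have hT1sum : (∑ A₀ ∈ S, ∑ A₁ ∈ S, T1 A₀ A₁) ≤ Real.sqrt 2 ^ α * C ^ 2 := by
    have step1 : ∀ A₀ ∈ S, (∑ A₁ ∈ S, T1 A₀ A₁)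
        ≤ (if minOf A₀ ≤ ntil then Real.sqrt 2 ^ α * C * (jbracket ((ntil : ℝ) - (minOf A₀ : ℝ)) ^ α * x A₀) else 0) := by
      intro A₀ hA₀
      rw [hT1def]; dsimp only
      rw [← Finset.mul_sum]
      split_ifs with h
      · rw [show Real.sqrt 2 ^ α * C * (jbracket ((ntil : ℝ) - (minOf A₀ : ℝ)) ^ α * x A₀)
            = (Real.sqrt 2 ^ α * jbracket ((ntil : ℝ) - (minOf A₀ : ℝ)) ^ α * x A₀) * C by ring]
        exact mul_le_mul_of_nonneg_left (hb A₀ hA₀)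
          (mul_nonneg (mul_nonneg hK.le (Real.rpow_nonneg (jb_nonneg _) _)) (hx _))
      · simp
    calc (∑ A₀ ∈ S, ∑ A₁ ∈ S, T1 A₀ A₁)
        ≤ ∑ A₀ ∈ S, (if minOf A₀ ≤ ntil then Real.sqrt 2 ^ α * C * (jbracket ((ntil : ℝ) - (minOf A₀ : ℝ)) ^ α * x A₀) else 0) :=
          Finset.sum_le_sum step1
      _ = ∑ A₀ ∈ S.filter (fun A => minOf A ≤ ntil),
            Real.sqrt 2 ^ α * C * (jbracket ((ntil : ℝ) - (minOf A₀ : ℝ)) ^ α * x A₀) :=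
          (Finset.sum_filter _ _).symm
      _ = Real.sqrt 2 ^ α * C * ∑ A₀ ∈ (Finset.Icc 1 n).powerset.filter (fun A => A.Nonempty ∧ minOf A ≤ ntil),
            (jbracket ((ntil : ℝ) - (minOf A₀ : ℝ)) ^ α * x A₀) := by
          rw [← Finset.mul_sum, hS, Finset.filter_filter]
      _ ≤ Real.sqrt 2 ^ α * C * C := mul_le_mul_of_nonneg_left hd1 (mul_nonneg hK.le hC.le)
      _ = Real.sqrt 2 ^ α * C ^ 2 := by ring
  -- Bound on T2 double sum
  set f : ℕ → ℝ := fun τ => jbracket (τ : ℝ) ^ α * s τ with hfdef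
  have hfnn : ∀ τ, 0 ≤ f τ := fun τ => mul_nonneg (Real.rpow_nonneg (jb_nonneg _) _) (hs τ)
  set u : ℕ → ℝ := fun τ₀ => ∑ τ₁ ∈ Finset.Icc 1 ntil, f (τ₀ - τ₁) with hudef
  have hunn : ∀ τ₀, 0 ≤ u τ₀ := fun τ₀ => Finset.sum_nonneg (fun _ _ => hfnn _)
  have stepA : ∀ A₀ ∈ S, (∑ A₁ ∈ S, T2 A₀ A₁)
      ≤ (if ntil < minOf A₀ then x A₀ * u (minOf A₀) else 0) := by
    intro A₀ hA₀
    by_cases h0 : ntil < minOf A₀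
    · rw [if_pos h0]
      have e1 : (∑ A₁ ∈ S, T2 A₀ A₁)
          = ∑ A₁ ∈ S.filter (fun A => minOf A ≤ ntil),
              jbracket ((ntil : ℝ) - (minOf A₁ : ℝ)) ^ α * (x A₀ * z A₀ A₁) := by
        rw [Finset.sum_filter (fun A => minOf A ≤ ntil)
          (fun A₁ => jbracket ((ntil : ℝ) - (minOf A₁ : ℝ)) ^ α * (x A₀ * z A₀ A₁))]
        apply Finset.sum_congr rfl
        intro A₁ _
        rw [hT2def]; dsimp only
        by_cases h : minOf A₁ ≤ ntil <;> simp [h, h0]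
      rw [e1]
      have hmaps : ∀ A₁ ∈ S.filter (fun A => minOf A ≤ ntil), minOf A₁ ∈ Finset.Icc 1 ntil := by
        intro A₁ hA₁
        rw [Finset.mem_filter] at hA₁
        obtain ⟨hA₁S, hle⟩ := hA₁
        obtain ⟨-, h1, -⟩ := hSmem A₁ hA₁S
        rw [Finset.mem_Icc]; exact ⟨h1, hle⟩
      rw [← Finset.sum_fiberwise_of_maps_to hmaps]
      rw [hudef]; dsimp only
      rw [Finset.mul_sum]
      apply Finset.sum_le_sum
      intro τ₁ hτ₁
      rw [Finset.mem_Icc] at hτ₁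
      have hsub : ((minOf A₀ - τ₁ : ℕ) : ℝ) = (minOf A₀ : ℝ) - (τ₁ : ℝ) := by
        have : τ₁ ≤ minOf A₀ := by omega
        push_cast [this]; ring
      have hfib : ∀ A₁ ∈ (S.filter (fun A => minOf A ≤ ntil)).filter (fun A => minOf A = τ₁),
          jbracket ((ntil : ℝ) - (minOf A₁ : ℝ)) ^ α * (x A₀ * z A₀ A₁)
          = jbracket ((ntil : ℝ) - (τ₁ : ℝ)) ^ α * x A₀ * z A₀ A₁ := by
        intro A₁ hA₁
        rw [Finset.mem_filter] at hA₁
        rw [hA₁.2]; ring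
      rw [Finset.sum_congr rfl hfib]
      have hzsum : (∑ A₁ ∈ (S.filter (fun A => minOf A ≤ ntil)).filter (fun A => minOf A = τ₁), z A₀ A₁)
          ≤ s (minOf A₀ - τ₁) := by
        refine le_trans (Finset.sum_le_sum_of_subset_of_nonneg ?_ (fun A₁ _ _ => hz A₀ A₁))
          (hc (minOf A₀ - τ₁) (minOf A₀) τ₁ A₀ rfl rfl)
        intro A₁ hA₁
        rw [Finset.mem_filter] at hA₁ ⊢
        rw [Finset.mem_filter] at hA₁
        obtain ⟨⟨hA₁S, -⟩, hmin⟩ := hA₁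
        rw [hS, Finset.mem_filter] at hA₁S
        exact ⟨hA₁S.1, hA₁S.2, hmin⟩
      have hjb : jbracket ((ntil : ℝ) - (τ₁ : ℝ)) ^ α ≤ jbracket ((minOf A₀ - τ₁ : ℕ) : ℝ) ^ α := by
        apply Real.rpow_le_rpow (jb_nonneg _) _ hα.le
        rw [hsub]
        apply jb_mono
        · simp only [sub_nonneg]; exact_mod_cast hτ₁.2
        · have : (ntil : ℝ) ≤ (minOf A₀ : ℝ) := by exact_mod_cast h0.le
          linarith
      calc (∑ A₁ ∈ (S.filter (fun A => minOf A ≤ ntil)).filter (fun A => minOf A = τ₁),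
              jbracket ((ntil : ℝ) - (τ₁ : ℝ)) ^ α * x A₀ * z A₀ A₁)
          = jbracket ((ntil : ℝ) - (τ₁ : ℝ)) ^ α * x A₀ *
              (∑ A₁ ∈ (S.filter (fun A => minOf A ≤ ntil)).filter (fun A => minOf A = τ₁), z A₀ A₁) := by
            rw [Finset.mul_sum]
        _ ≤ jbracket ((ntil : ℝ) - (τ₁ : ℝ)) ^ α * x A₀ * s (minOf A₀ - τ₁) :=
            mul_le_mul_of_nonneg_left hzsum
              (mul_nonneg (Real.rpow_nonneg (jb_nonneg _) _) (hx _))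
        _ ≤ jbracket ((minOf A₀ - τ₁ : ℕ) : ℝ) ^ α * x A₀ * s (minOf A₀ - τ₁) := by
            apply mul_le_mul_of_nonneg_right _ (hs _)
            exact mul_le_mul_of_nonneg_right hjb (hx _)
        _ = x A₀ * f (minOf A₀ - τ₁) := by rw [hfdef]; ring
    · rw [if_neg h0]
      apply le_of_eq
      apply Finset.sum_eq_zero
      intro A₁ _
      rw [hT2def]; dsimp only
      rw [if_neg]; push_neg; intro h; omega
  have stepC : (∑ τ₀ ∈ Finset.Icc (ntil+1) n, u τ₀) ≤ C := by
    have e1 : (∑ τ₀ ∈ Finset.Icc (ntil+1) n, u τ₀)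
        = ∑ p ∈ (Finset.Icc (ntil+1) n) ×ˢ (Finset.Icc 1 ntil), f (p.1 - p.2) := by
      rw [Finset.sum_product]
    rw [e1]
    have hmaps : ∀ p ∈ (Finset.Icc (ntil+1) n) ×ˢ (Finset.Icc 1 ntil),
        p.1 - p.2 ∈ Finset.Icc 1 n := by
      intro p hp
      rw [Finset.mem_product, Finset.mem_Icc, Finset.mem_Icc] at hp
      rw [Finset.mem_Icc]; omega
    rw [← Finset.sum_fiberwise_of_maps_to hmaps]
    have step : ∀ τ ∈ Finset.Icc 1 n,
        (∑ p ∈ ((Finset.Icc (ntil+1) n) ×ˢ (Finset.Icc 1 ntil)).filter (fun p => p.1 - p.2 = τ),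
          f (p.1 - p.2)) ≤ jbracket (τ : ℝ) ^ (1 + α) * s τ := by
      intro τ hτ
      rw [Finset.mem_Icc] at hτ
      have e2 : (∑ p ∈ ((Finset.Icc (ntil+1) n) ×ˢ (Finset.Icc 1 ntil)).filter (fun p => p.1 - p.2 = τ),
          f (p.1 - p.2)) = (((Finset.Icc (ntil+1) n) ×ˢ (Finset.Icc 1 ntil)).filter (fun p => p.1 - p.2 = τ)).card * f τ := by
        calc (∑ p ∈ ((Finset.Icc (ntil+1) n) ×ˢ (Finset.Icc 1 ntil)).filter (fun p => p.1 - p.2 = τ), f (p.1 - p.2))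
            = ∑ _p ∈ ((Finset.Icc (ntil+1) n) ×ˢ (Finset.Icc 1 ntil)).filter (fun p => p.1 - p.2 = τ), f τ :=
              Finset.sum_congr rfl (fun p hp => by rw [(Finset.mem_filter.1 hp).2])
          _ = _ := by rw [Finset.sum_const, nsmul_eq_mul]
      rw [e2]
      have hcard : (((Finset.Icc (ntil+1) n) ×ˢ (Finset.Icc 1 ntil)).filter (fun p => p.1 - p.2 = τ)).card ≤ τ := by
        have hinj : Set.InjOn (fun p => p.2)
            ((((Finset.Icc (ntil+1) n) ×ˢ (Finset.Icc 1 ntil)).filter (fun p => p.1 - p.2 = τ)) : Set (ℕ × ℕ)) := by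
          intro p hp q hq hpq
          simp only [Finset.coe_filter, Set.mem_setOf_eq, Finset.mem_product, Finset.mem_Icc] at hp hq
          have h2 : p.2 = q.2 := hpq
          have h1 : p.1 = q.1 := by omega
          exact Prod.ext h1 h2
        have hmaps2 : ∀ p ∈ (((Finset.Icc (ntil+1) n) ×ˢ (Finset.Icc 1 ntil)).filter (fun p => p.1 - p.2 = τ)),
            (fun p : ℕ × ℕ => p.2) p ∈ Finset.Ioc (ntil - τ) ntil := by
          intro p hp
          simp only [Finset.mem_filter, Finset.mem_product, Finset.mem_Icc] at hp
          dsimp only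
          rw [Finset.mem_Ioc]; omega
        calc (((Finset.Icc (ntil+1) n) ×ˢ (Finset.Icc 1 ntil)).filter (fun p => p.1 - p.2 = τ)).card
            ≤ (Finset.Ioc (ntil - τ) ntil).card := Finset.card_le_card_of_injOn _ hmaps2 hinj
          _ = ntil - (ntil - τ) := Nat.card_Ioc _ _
          _ ≤ τ := by omega
      calc ((((Finset.Icc (ntil+1) n) ×ˢ (Finset.Icc 1 ntil)).filter (fun p => p.1 - p.2 = τ)).card : ℝ) * f τ
          ≤ (τ : ℝ) * f τ := by
            apply mul_le_mul_of_nonneg_right _ (hfnn τ)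
            exact_mod_cast hcard
        _ ≤ jbracket (τ : ℝ) * f τ := mul_le_mul_of_nonneg_right (le_jb (by positivity)) (hfnn τ)
        _ = jbracket (τ : ℝ) ^ (1 + α) * s τ := by
            rw [hfdef]; dsimp only
            rw [Real.rpow_add (jb_pos _) 1 α, Real.rpow_one]; ring
    calc (∑ τ ∈ Finset.Icc 1 n,
          ∑ p ∈ ((Finset.Icc (ntil+1) n) ×ˢ (Finset.Icc 1 ntil)).filter (fun p => p.1 - p.2 = τ),
            f (p.1 - p.2))
        ≤ ∑ τ ∈ Finset.Icc 1 n, jbracket (τ : ℝ) ^ (1 + α) * s τ := Finset.sum_le_sum step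
      _ ≤ C := hsC
  have hT2sum : (∑ A₀ ∈ S, ∑ A₁ ∈ S, T2 A₀ A₁) ≤ C ^ 2 := by
    have hmaps : ∀ A₀ ∈ S.filter (fun A => ntil < minOf A), minOf A₀ ∈ Finset.Icc (ntil+1) n := by
      intro A₀ hA₀
      rw [Finset.mem_filter] at hA₀
      obtain ⟨hA₀S, hlt⟩ := hA₀
      obtain ⟨-, -, h2⟩ := hSmem A₀ hA₀S
      rw [Finset.mem_Icc]; omega
    calc (∑ A₀ ∈ S, ∑ A₁ ∈ S, T2 A₀ A₁)
        ≤ ∑ A₀ ∈ S, (if ntil < minOf A₀ then x A₀ * u (minOf A₀) else 0) :=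
          Finset.sum_le_sum stepA
      _ = ∑ A₀ ∈ S.filter (fun A => ntil < minOf A), x A₀ * u (minOf A₀) :=
          (Finset.sum_filter _ _).symm
      _ = ∑ τ₀ ∈ Finset.Icc (ntil+1) n,
            ∑ A₀ ∈ (S.filter (fun A => ntil < minOf A)).filter (fun A => minOf A = τ₀),
              x A₀ * u (minOf A₀) := (Finset.sum_fiberwise_of_maps_to hmaps _).symm
      _ ≤ ∑ τ₀ ∈ Finset.Icc (ntil+1) n, C * u τ₀ := by
          apply Finset.sum_le_sum
          intro τ₀ _
          have e3 : (∑ A₀ ∈ (S.filter (fun A => ntil < minOf A)).filter (fun A => minOf A = τ₀),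
              x A₀ * u (minOf A₀))
              = (∑ A₀ ∈ (S.filter (fun A => ntil < minOf A)).filter (fun A => minOf A = τ₀), x A₀) * u τ₀ := by
            rw [Finset.sum_mul]
            apply Finset.sum_congr rfl
            intro A₀ hA₀
            rw [Finset.mem_filter] at hA₀
            rw [hA₀.2]
          rw [e3]
          apply mul_le_mul_of_nonneg_right _ (hunn τ₀)
          refine le_trans (Finset.sum_le_sum_of_subset_of_nonneg ?_ (fun A₀ _ _ => hx A₀)) (hd2 τ₀)
          intro A₀ hA₀
          rw [Finset.mem_filter] at hA₀
          rw [Finset.mem_filter] at hA₀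
          obtain ⟨⟨hA₀S, -⟩, hmin⟩ := hA₀
          rw [hS, Finset.mem_filter] at hA₀S
          rw [Finset.mem_filter]
          exact ⟨hA₀S.1, hA₀S.2, hmin⟩
      _ = C * ∑ τ₀ ∈ Finset.Icc (ntil+1) n, u τ₀ := by rw [Finset.mul_sum]
      _ ≤ C * C := mul_le_mul_of_nonneg_left stepC hC.le
      _ = C ^ 2 := by ring
  calc (∑ A₀ ∈ S, ∑ A₁ ∈ S,
      (if minOf (A₀ ∪ A₁) ≤ ntil then
        (jbracket ((ntil : ℝ) - (minOf (A₀ ∪ A₁) : ℝ))) ^ α * x A₀ * z A₀ A₁ else 0))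
      ≤ (∑ A₀ ∈ S, ∑ A₁ ∈ S, T1 A₀ A₁) + (∑ A₀ ∈ S, ∑ A₁ ∈ S, T2 A₀ A₁) := split
    _ ≤ Real.sqrt 2 ^ α * C ^ 2 + C ^ 2 := add_le_add hT1sum hT2sum
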